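/- Let f be a homeomorphism of a compact metric space X satisfying: (1) for every ε>0 there is δ>0 such that d(a,b)<δ implies W^s_ε(a) ∩ W^u_ε(b) ≠ ∅, and (2) for every x∈X there is c>0 such that W^s_c(x)={x}. Then X is finite. -/

import Mathlib

open Filter Metric Set Topology

variable {X : Type*} [MetricSpace X]

/-- `f^k x` for `k : ℤ`, where `f` is a homeomorphism. -/
def iterZ (f : X ≃ₜ X) (k : ℤ) (x : X) : X :=
  if 0 ≤ k then (⇑f)^[k.toNat] x else (⇑f.symm)^[(-k).toNat] x

/-- The classical shadowing property. -/
def Shadowing (f : X ≃ₜ X) : Prop :=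
  ∀ ε > (0:ℝ), ∃ δ > (0:ℝ), ∀ x : ℤ → X,
    (∀ k : ℤ, dist (f (x k)) (x (k+1)) < δ) →
    ∃ z : X, ∀ k : ℤ, dist (iterZ f k z) (x k) < ε

/-- The L-shadowing property. -/
def LShadowing (f : X ≃ₜ X) : Prop :=
  ∀ ε > (0:ℝ), ∃ δ > (0:ℝ), ∀ x : ℤ → X,
    (∀ k : ℤ, dist (f (x k)) (x (k+1)) ≤ δ) →
    Tendsto (fun k : ℤ => dist (f (x k)) (x (k+1))) cofinite (nhds 0) →
    ∃ z : X, (∀ k : ℤ, dist (iterZ f k z) (x k) ≤ ε) ∧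
      Tendsto (fun k : ℤ => dist (iterZ f k z) (x k)) cofinite (nhds 0)

/-- The stable set of `x`. -/
def stableSet (f : X ≃ₜ X) (x : X) : Set X :=
  {y | Tendsto (fun n : ℕ => dist ((⇑f)^[n] x) ((⇑f)^[n] y)) atTop (nhds 0)}

/-- The unstable set of `x`. -/
def unstableSet (f : X ≃ₜ X) (x : X) : Set X := stableSet f.symm x

/-- The local stable set of size `ε` of `x`. -/
def localStable (f : X ≃ₜ X) (ε : ℝ) (x : X) : Set X :=
  {y | ∀ n : ℕ, dist ((⇑f)^[n] x) ((⇑f)^[n] y) ≤ ε}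

/-- The local unstable set of size `ε` of `x`. -/
def localUnstable (f : X ≃ₜ X) (ε : ℝ) (x : X) : Set X := localStable f.symm ε x

/-- `V^s_ε(x) = W^s(x) ∩ W^s_ε(x)`. -/
def Vs (f : X ≃ₜ X) (ε : ℝ) (x : X) : Set X := stableSet f x ∩ localStable f ε x

/-- `V^u_ε(x) = W^u(x) ∩ W^u_ε(x)`. -/
def Vu (f : X ≃ₜ X) (ε : ℝ) (x : X) : Set X := unstableSet f x ∩ localUnstable f ε x

/-- The limit shadowing property. -/
def LimitShadowing (f : X ≃ₜ X) : Prop :=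
  ∀ x : ℕ → X, Tendsto (fun k : ℕ => dist (f (x k)) (x (k+1))) atTop (nhds 0) →
    ∃ y : X, Tendsto (fun k : ℕ => dist ((⇑f)^[k] y) (x k)) atTop (nhds 0)

/-- The two-sided limit shadowing property. -/
def TwoSidedLimitShadowing (f : X ≃ₜ X) : Prop :=
  ∀ x : ℤ → X, Tendsto (fun k : ℤ => dist (f (x k)) (x (k+1))) cofinite (nhds 0) →
    ∃ y : X, Tendsto (fun k : ℤ => dist (iterZ f k y) (x k)) cofinite (nhds 0)

/-- A non-wandering point. -/
def NonWandering (f : X ≃ₜ X) (x : X) : Prop :=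
  ∀ U : Set X, IsOpen U → x ∈ U → ∃ k : ℕ, 0 < k ∧ ((⇑f)^[k] '' U ∩ U).Nonempty

/-- The non-wandering set. -/
def omegaSet (f : X ≃ₜ X) : Set X := {x | NonWandering f x}

/-- Topologically mixing. -/
def TopMixing (f : X ≃ₜ X) : Prop :=
  ∀ U V : Set X, IsOpen U → IsOpen V → U.Nonempty → V.Nonempty →
    ∃ n : ℕ, 0 < n ∧ ∀ k ≥ n, ((⇑f)^[k] '' U ∩ V).Nonempty

/-- `f` is expansive on the set `A` (as a subsystem). -/
def ExpansiveOn (f : X ≃ₜ X) (A : Set X) : Prop :=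
  ∃ c > (0:ℝ), ∀ x ∈ A, ∀ y ∈ A,
    (∀ k : ℤ, dist (iterZ f k x) (iterZ f k y) ≤ c) → x = y

/-- The dynamical ball `Γ_δ(x)`. -/
def dynBall (f : X ≃ₜ X) (δ : ℝ) (x : X) : Set X :=
  {y | ∀ k : ℤ, dist (iterZ f k x) (iterZ f k y) ≤ δ}

/-- There is a periodic `ε`-pseudo-orbit containing both `x` and `y`. -/
def ChainRel (f : X ≃ₜ X) (ε : ℝ) (x y : X) : Prop :=
  ∃ (n : ℕ) (z : ℕ → X), 0 < n ∧ z 0 = x ∧ z n = x ∧ (∃ i ≤ n, z i = y) ∧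
    ∀ i < n, dist (f (z i)) (z (i+1)) < ε

/-- The chain recurrent class of `x`. -/
def chainClass (f : X ≃ₜ X) (x : X) : Set X := {y | ∀ ε > (0:ℝ), ChainRel f ε x y}

/-- `h` is a semiconjugacy from `g` on `K` to the full shift on two symbols. -/
def SemiConjShift (g : X → X) (K : Set X) (h : X → (ℤ → Bool)) : Prop :=
  ContinuousOn h K ∧ (∀ s : ℤ → Bool, ∃ p ∈ K, h p = s) ∧
    ∀ p ∈ K, h (g p) = fun i => h p (i + 1)

/-- `f` admits arbitrarily small topological semi-horseshoes inside `C`. -/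
def SmallHorseshoes (f : X ≃ₜ X) (C : Set X) : Prop :=
  ∀ ε > (0:ℝ), ∃ N : ℕ, 1 ≤ N ∧ ∃ K : Set X, K ⊆ C ∧ IsCompact K ∧
    (⇑f)^[N] '' K = K ∧ (∀ k : ℤ, Metric.diam (iterZ f k '' K) ≤ ε) ∧
    ∃ h : X → (ℤ → Bool), SemiConjShift ((⇑f)^[N]) K h

/-- Auxiliary: sup of distances along backward orbits. -/
noncomputable def phiF (f : X ≃ₜ X) (x y : X) : ℝ :=
  ⨆ n : ℕ, dist ((⇑f.symm)^[n] x) ((⇑f.symm)^[n] y)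

section Aux

variable [CompactSpace X] (f : X ≃ₜ X)

lemma phiF_bdd (x y : X) :
    BddAbove (Set.range fun n : ℕ => dist ((⇑f.symm)^[n] x) ((⇑f.symm)^[n] y)) := by
  refine ⟨Metric.diam (Set.univ : Set X), ?_⟩
  rintro r ⟨n, rfl⟩
  exact Metric.dist_le_diam_of_mem isBounded_of_compactSpace (Set.mem_univ _) (Set.mem_univ _)

lemma dist_iter_le_phiF (x y : X) (n : ℕ) :
    dist ((⇑f.symm)^[n] x) ((⇑f.symm)^[n] y) ≤ phiF f x y :=
  le_ciSup (phiF_bdd f x y) n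

lemma dist_le_phiF (x y : X) : dist x y ≤ phiF f x y := by
  simpa using dist_iter_le_phiF f x y 0

lemma phiF_le {ε : ℝ} {x y : X}
    (h : ∀ n : ℕ, dist ((⇑f.symm)^[n] x) ((⇑f.symm)^[n] y) ≤ ε) : phiF f x y ≤ ε :=
  ciSup_le h

lemma phiF_le_diam (x y : X) : phiF f x y ≤ Metric.diam (Set.univ : Set X) :=
  phiF_le f fun _ =>
    Metric.dist_le_diam_of_mem isBounded_of_compactSpace (Set.mem_univ _) (Set.mem_univ _)

lemma phiF_symm (x y : X) : phiF f x y = phiF f y x := by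
  unfold phiF
  simp only [dist_comm]

lemma phiF_symm_apply_le (x y : X) : phiF f (f.symm x) (f.symm y) ≤ phiF f x y := by
  refine phiF_le f fun n => ?_
  rw [← Function.iterate_succ_apply, ← Function.iterate_succ_apply]
  exact dist_iter_le_phiF f x y (n + 1)

lemma phiF_iter_le (x y : X) (m : ℕ) :
    phiF f ((⇑f.symm)^[m] x) ((⇑f.symm)^[m] y) ≤ phiF f x y := by
  induction m with
  | zero => simp
  | succ k ih =>
    rw [Function.iterate_succ_apply', Function.iterate_succ_apply']
    exact (phiF_symm_apply_le f _ _).trans ih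

lemma phiF_triangle (x y z : X) : phiF f x z ≤ phiF f x y + phiF f y z :=
  phiF_le f fun n => (dist_triangle _ _ _).trans
    (add_le_add (dist_iter_le_phiF f x y n) (dist_iter_le_phiF f y z n))

lemma phiF_abs_sub (x y u v : X) :
    |phiF f x y - phiF f u v| ≤ phiF f x u + phiF f y v := by
  rw [abs_sub_le_iff]
  constructor
  · have t1 := phiF_triangle f x u y
    have t2 := phiF_triangle f u v y
    have t3 := phiF_symm f v y
    linarith
  · have t1 := phiF_triangle f u x v
    have t2 := phiF_triangle f x y v
    have t3 := phiF_symm f u x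
    linarith

lemma symm_iter_apply_iter (n : ℕ) (x : X) : (⇑f.symm)^[n] ((⇑f)^[n] x) = x := by
  induction n with
  | zero => rfl
  | succ k ih =>
    rw [Function.iterate_succ_apply' (⇑f), Function.iterate_succ_apply (⇑f.symm)]
    simp only [Homeomorph.symm_apply_apply]
    exact ih

lemma symm_iter_apply_iter_of_le {m n : ℕ} (h : m ≤ n) (x : X) :
    (⇑f.symm)^[m] ((⇑f)^[n] x) = (⇑f)^[n - m] x := by
  conv_lhs => rw [show n = m + (n - m) by omega, Function.iterate_add_apply]
  exact symm_iter_apply_iter f m _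

end Aux

set_option linter.unusedSectionVars false in
/-- local product structure plus trivial local stable sets force
the space to be finite. -/
theorem finite_of_localProduct_trivialStable [CompactSpace X] (f : X ≃ₜ X)
    (h1 : ∀ ε > (0:ℝ), ∃ δ > (0:ℝ), ∀ a b : X,
      dist a b < δ → (localStable f ε a ∩ localUnstable f ε b).Nonempty)
    (h2 : ∀ x : X, ∃ c > (0:ℝ), localStable f c x = {x}) :
    Finite X := by
  -- Step 1: pointwise backward Lyapunov stability at all scales
  have pt : ∀ (x : X) (ε : ℝ), 0 < ε → ∃ δ > (0:ℝ), ∀ y : X, dist x y < δ →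
      ∀ n : ℕ, dist ((⇑f.symm)^[n] x) ((⇑f.symm)^[n] y) ≤ ε := by
    intro x ε hε
    obtain ⟨c, hc, hcx⟩ := h2 x
    obtain ⟨δ, hδ, hprod⟩ := h1 (min ε c) (lt_min hε hc)
    refine ⟨δ, hδ, fun y hy n => ?_⟩
    obtain ⟨z, hzs, hzu⟩ := hprod x y hy
    have hzx : z = x := by
      have hz : z ∈ localStable f c x := fun m => (hzs m).trans (min_le_right _ _)
      rwa [hcx, Set.mem_singleton_iff] at hz
    have hn := hzu n
    rw [hzx] at hn
    calc dist ((⇑f.symm)^[n] x) ((⇑f.symm)^[n] y)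
        = dist ((⇑f.symm)^[n] y) ((⇑f.symm)^[n] x) := dist_comm _ _
      _ ≤ min ε c := hn
      _ ≤ ε := min_le_left _ _
  -- Step 2: uniform version, phrased with phiF
  have unif : ∀ ε : ℝ, 0 < ε → ∃ δ > (0:ℝ), ∀ x y : X, dist x y < δ → phiF f x y ≤ ε := by
    intro ε hε
    have hε2 : 0 < ε / 2 := by positivity
    choose δ hδ hball using fun x => pt x (ε / 2) hε2
    obtain ⟨r, hr, hcov⟩ := lebesgue_number_lemma_of_metric (isCompact_univ (X := X))
      (fun x => isOpen_ball) (fun x _ => Set.mem_iUnion.2 ⟨x, mem_ball_self (hδ x)⟩)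
    refine ⟨r, hr, fun x y hxy => ?_⟩
    obtain ⟨z, hz⟩ := hcov x (Set.mem_univ x)
    have hx : dist z x < δ z := by
      have := hz (mem_ball_self hr)
      rwa [mem_ball, dist_comm] at this
    have hy : dist z y < δ z := by
      have hyx : y ∈ ball x r := by rwa [mem_ball, dist_comm]
      have := hz hyx
      rwa [mem_ball, dist_comm] at this
    refine phiF_le f fun n => ?_
    calc dist ((⇑f.symm)^[n] x) ((⇑f.symm)^[n] y)
        ≤ dist ((⇑f.symm)^[n] x) ((⇑f.symm)^[n] z)
          + dist ((⇑f.symm)^[n] z) ((⇑f.symm)^[n] y) := dist_triangle _ _ _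
      _ ≤ ε / 2 + ε / 2 := by
          refine add_le_add ?_ (hball z y hy n)
          rw [dist_comm]
          exact hball z x hx n
      _ = ε := by ring
  -- helper: phiF tends to zero along converging sequences
  have tphi : ∀ (w : ℕ → X) (l : X), Tendsto w atTop (𝓝 l) →
      Tendsto (fun i => phiF f (w i) l) atTop (𝓝 0) := by
    intro w l hw
    rw [Metric.tendsto_atTop] at hw ⊢
    intro ε hε
    obtain ⟨δ, hδ, hu⟩ := unif (ε / 2) (by positivity)
    obtain ⟨N, hN⟩ := hw δ hδ
    refine ⟨N, fun n hn => ?_⟩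
    have hle : phiF f (w n) l ≤ ε / 2 := hu _ _ (hN n hn)
    have h0 : 0 ≤ phiF f (w n) l := dist_nonneg.trans (dist_le_phiF f _ _)
    rw [Real.dist_eq, sub_zero, abs_of_nonneg h0]
    linarith
  -- Step 3: phiF is invariant under f.symm (hence under f)
  have inv : ∀ x y : X, phiF f (f.symm x) (f.symm y) = phiF f x y := by
    intro x y
    set a : ℕ → X := fun n => (⇑f)^[n] x with ha
    set b : ℕ → X := fun n => (⇑f)^[n] y with hb
    set s : ℕ → ℝ := fun n => phiF f (a n) (b n) with hs
    have hga : ∀ n, f.symm (a (n + 1)) = a n := by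
      intro n
      simp only [ha, Function.iterate_succ_apply' (⇑f), Homeomorph.symm_apply_apply]
    have hgb : ∀ n, f.symm (b (n + 1)) = b n := by
      intro n
      simp only [hb, Function.iterate_succ_apply' (⇑f), Homeomorph.symm_apply_apply]
    have hmono : Monotone s := by
      refine monotone_nat_of_le_succ fun n => ?_
      calc s n = phiF f (f.symm (a (n + 1))) (f.symm (b (n + 1))) := by rw [hga, hgb]
        _ ≤ s (n + 1) := phiF_symm_apply_le f _ _
    have hbdd : BddAbove (Set.range s) := by
      refine ⟨Metric.diam (Set.univ : Set X), ?_⟩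
      rintro r ⟨n, rfl⟩
      exact phiF_le_diam f _ _
    set L := ⨆ n, s n with hLdef
    have hL : Tendsto s atTop (𝓝 L) := tendsto_atTop_ciSup hmono hbdd
    obtain ⟨⟨u, v⟩, ψ, hψ, hconv⟩ := CompactSpace.tendsto_subseq (fun n => (a n, b n))
    have hau : Tendsto (fun i => a (ψ i)) atTop (𝓝 u) :=
      (continuous_fst.tendsto (u, v)).comp hconv
    have hbv : Tendsto (fun i => b (ψ i)) atTop (𝓝 v) :=
      (continuous_snd.tendsto (u, v)).comp hconv
    have hta : Tendsto (fun i => phiF f (a (ψ i)) u) atTop (𝓝 0) := tphi _ _ hau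
    have htb : Tendsto (fun i => phiF f (b (ψ i)) v) atTop (𝓝 0) := tphi _ _ hbv
    have hsum : Tendsto (fun i => phiF f (a (ψ i)) u + phiF f (b (ψ i)) v) atTop (𝓝 0) := by
      simpa using hta.add htb
    -- the limit pair has constant phiF along backward orbit, equal to L
    have claim0 : ∀ m : ℕ, phiF f ((⇑f.symm)^[m] u) ((⇑f.symm)^[m] v) = L := by
      intro m
      have hlim1 : Tendsto (fun i => s (ψ i - m)) atTop (𝓝 L) :=
        hL.comp ((tendsto_sub_atTop_nat m).comp hψ.tendsto_atTop)
      have hlim2 : Tendsto (fun i => s (ψ i - m)) atTop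
          (𝓝 (phiF f ((⇑f.symm)^[m] u) ((⇑f.symm)^[m] v))) := by
        rw [tendsto_iff_dist_tendsto_zero]
        refine squeeze_zero' (Eventually.of_forall fun i => dist_nonneg) ?_ hsum
        filter_upwards [eventually_ge_atTop m] with i hi
        have hmi : m ≤ ψ i := hi.trans (hψ.le_apply)
        have e1 : (⇑f.symm)^[m] (a (ψ i)) = a (ψ i - m) :=
          symm_iter_apply_iter_of_le f hmi x
        have e2 : (⇑f.symm)^[m] (b (ψ i)) = b (ψ i - m) :=
          symm_iter_apply_iter_of_le f hmi y
        have hle := (phiF_abs_sub f ((⇑f.symm)^[m] (a (ψ i))) ((⇑f.symm)^[m] (b (ψ i)))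
          ((⇑f.symm)^[m] u) ((⇑f.symm)^[m] v)).trans
          (add_le_add (phiF_iter_le f (a (ψ i)) u m) (phiF_iter_le f (b (ψ i)) v m))
        rw [e1, e2] at hle
        rw [Real.dist_eq]
        exact hle
      exact tendsto_nhds_unique hlim2 hlim1
    -- a quantity eventually dominated by the vanishing sum and equal to |phiF p q - L| is 0
    have key2 : ∀ p q : X,
        (∀ i : ℕ, |phiF f p q - L| ≤ phiF f (a (ψ i)) u + phiF f (b (ψ i)) v) →
        phiF f p q = L := by
      intro p q hpq
      have h0 : |phiF f p q - L| ≤ 0 := ge_of_tendsto hsum (Eventually.of_forall hpq)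
      have := le_antisymm h0 (abs_nonneg _)
      have := abs_eq_zero.mp this
      linarith
    have hxL : phiF f x y = L := by
      refine key2 x y fun i => ?_
      have e1 : (⇑f.symm)^[ψ i] (a (ψ i)) = x := symm_iter_apply_iter f (ψ i) x
      have e2 : (⇑f.symm)^[ψ i] (b (ψ i)) = y := symm_iter_apply_iter f (ψ i) y
      have hle := (phiF_abs_sub f ((⇑f.symm)^[ψ i] (a (ψ i))) ((⇑f.symm)^[ψ i] (b (ψ i)))
        ((⇑f.symm)^[ψ i] u) ((⇑f.symm)^[ψ i] v)).trans
        (add_le_add (phiF_iter_le f (a (ψ i)) u (ψ i)) (phiF_iter_le f (b (ψ i)) v (ψ i)))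
      rw [e1, e2, claim0 (ψ i)] at hle
      exact hle
    have hgL : phiF f (f.symm x) (f.symm y) = L := by
      refine key2 (f.symm x) (f.symm y) fun i => ?_
      have e1 : (⇑f.symm)^[ψ i + 1] (a (ψ i)) = f.symm x := by
        rw [Function.iterate_succ_apply' (⇑f.symm), symm_iter_apply_iter f (ψ i) x]
      have e2 : (⇑f.symm)^[ψ i + 1] (b (ψ i)) = f.symm y := by
        rw [Function.iterate_succ_apply' (⇑f.symm), symm_iter_apply_iter f (ψ i) y]
      have hle := (phiF_abs_sub f ((⇑f.symm)^[ψ i + 1] (a (ψ i))) ((⇑f.symm)^[ψ i + 1] (b (ψ i)))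
        ((⇑f.symm)^[ψ i + 1] u) ((⇑f.symm)^[ψ i + 1] v)).trans
        (add_le_add (phiF_iter_le f (a (ψ i)) u (ψ i + 1)) (phiF_iter_le f (b (ψ i)) v (ψ i + 1)))
      rw [e1, e2, claim0 (ψ i + 1)] at hle
      exact hle
    rw [hgL, hxL]
  -- Step 4: forward iterates are controlled by phiF
  have fwd : ∀ (n : ℕ) (x y : X), dist ((⇑f)^[n] x) ((⇑f)^[n] y) ≤ phiF f x y := by
    intro n x y
    have hinv : ∀ m : ℕ, phiF f ((⇑f)^[m] x) ((⇑f)^[m] y) = phiF f x y := by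
      intro m
      induction m with
      | zero => rfl
      | succ k ih =>
        have h := inv ((⇑f) ((⇑f)^[k] x)) ((⇑f) ((⇑f)^[k] y))
        rw [Homeomorph.symm_apply_apply, Homeomorph.symm_apply_apply] at h
        rw [Function.iterate_succ_apply' (⇑f) k x, Function.iterate_succ_apply' (⇑f) k y, ← h]
        exact ih
    calc dist ((⇑f)^[n] x) ((⇑f)^[n] y) ≤ phiF f ((⇑f)^[n] x) ((⇑f)^[n] y) := dist_le_phiF f _ _
      _ = phiF f x y := hinv n
  -- Step 5: every point is isolated
  have hiso : ∀ x : X, IsOpen ({x} : Set X) := by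
    intro x
    obtain ⟨c, hc, hcx⟩ := h2 x
    obtain ⟨δ, hδ, hu⟩ := unif c hc
    rw [Metric.isOpen_singleton_iff]
    refine ⟨δ, hδ, fun y hy => ?_⟩
    have hφ : phiF f x y ≤ c := hu x y (by rwa [dist_comm])
    have hmem : y ∈ localStable f c x := fun n => (fwd n x y).trans hφ
    rw [hcx, Set.mem_singleton_iff] at hmem
    exact hmem
  have : DiscreteTopology X := discreteTopology_iff_isOpen_singleton.mpr hiso
  exact finite_of_compact_of_discrete
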